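/- Let B be a Haar measurable subset of 𝕋 with μ(B) > 0, and let λ < 1. Then there exist only finitely many integers n such that μ(n·B) ≤ λ. -/

import Mathlib

open Pointwise MeasureTheory

/-- The inner Haar measure of a subset of the circle `𝕋 = ℝ/ℤ`:
the supremum of the Haar measures of closed subsets (equal to the Haar measure
for measurable sets). -/
noncomputable def innerHaar (A : Set UnitAddCircle) : ℝ :=
  (⨆ (K : Set UnitAddCircle) (_ : IsClosed K) (_ : K ⊆ A), volume K).toReal

open Set Metric Filter Topology

lemma zsmul_mem_zsmul_set {B : Set UnitAddCircle} {b : UnitAddCircle} (hb : b ∈ B) (n : ℤ) :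
    n • b ∈ n • B := by
  cases n with
  | ofNat m =>
    show (Int.ofNat m) • b ∈ (m • B : Set UnitAddCircle)
    rw [Int.ofNat_eq_natCast, natCast_zsmul]
    exact Set.nsmul_mem_nsmul hb
  | negSucc m =>
    show (Int.negSucc m) • b ∈ (-((m + 1) • B) : Set UnitAddCircle)
    rw [negSucc_zsmul]
    exact Set.neg_mem_neg.mpr (Set.nsmul_mem_nsmul hb)

lemma innerHaar_sup_le_one (A : Set UnitAddCircle) :
    (⨆ (K : Set UnitAddCircle) (_ : IsClosed K) (_ : K ⊆ A), volume K) ≤ 1 := by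
  refine iSup_le fun K => iSup_le fun _ => iSup_le fun _ => ?_
  calc volume K ≤ volume univ := measure_mono (subset_univ K)
  _ = 1 := UnitAddCircle.measure_univ

/-- Lower bound on innerHaar from a closed subset. -/
lemma le_innerHaar {A K : Set UnitAddCircle} (hKc : IsClosed K) (hKA : K ⊆ A) {c : ℝ}
    (hc : ENNReal.ofReal c < volume K) : c < innerHaar A := by
  have h1 : volume K ≤ ⨆ (K' : Set UnitAddCircle) (_ : IsClosed K') (_ : K' ⊆ A), volume K' := by
    refine le_iSup_of_le K ?_
    rw [iSup_pos hKc, iSup_pos hKA]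
  have hne : (⨆ (K' : Set UnitAddCircle) (_ : IsClosed K') (_ : K' ⊆ A), volume K') ≠ ⊤ :=
    (lt_of_le_of_lt (innerHaar_sup_le_one A) (by norm_num)).ne
  have h3 : ENNReal.ofReal c < ⨆ (K' : Set UnitAddCircle) (_ : IsClosed K') (_ : K' ⊆ A),
      volume K' := lt_of_lt_of_le hc h1
  have h4 : c ≤ (ENNReal.ofReal c).toReal := by
    rcases le_or_gt 0 c with h | h
    · rw [ENNReal.toReal_ofReal h]
    · calc c ≤ 0 := h.le
      _ ≤ _ := ENNReal.toReal_nonneg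
  calc c ≤ (ENNReal.ofReal c).toReal := h4
  _ < innerHaar A := (ENNReal.toReal_lt_toReal ENNReal.ofReal_ne_top hne).mpr h3

theorem stmt_14 (B : Set UnitAddCircle) (hB : MeasurableSet B)
    (h0 : 0 < innerHaar B) (l : ℝ) (hl : l < 1) :
    {n : ℤ | innerHaar (n • B) ≤ l}.Finite := by
  -- extract a closed subset of positive measure
  obtain ⟨K, hKc, hKB, hK0⟩ : ∃ K : Set UnitAddCircle, IsClosed K ∧ K ⊆ B ∧ 0 < volume K := by
    by_contra h
    push_neg at h
    have : (⨆ (K : Set UnitAddCircle) (_ : IsClosed K) (_ : K ⊆ B), volume K) = 0 := by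
      simp only [ENNReal.iSup_eq_zero]
      intro K hc hs
      exact le_antisymm (h K hc hs) (zero_le)
    rw [innerHaar, this] at h0
    simp at h0
  -- the set A ⊆ ℝ
  set A : Set ℝ := (QuotientAddGroup.mk ⁻¹' K) ∩ Ioc (0:ℝ) (0 + 1) with hA
  have hKmeas : MeasurableSet K := hKc.measurableSet
  have hAmeas : MeasurableSet A :=
    ((AddCircle.measurable_mk' (a := 1)) hKmeas).inter measurableSet_Ioc
  have hAvol : volume A = volume K :=
    (AddCircle.add_projection_respects_measure (T := 1) 0 hKmeas).symm
  have hA0 : volume A ≠ 0 := by rw [hAvol]; exact hK0.ne'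
  -- density point
  have hres : volume.restrict A ≠ 0 := by
    intro h
    apply hA0
    rw [← Measure.restrict_apply_univ, h]; rfl
  haveI : (ae (volume.restrict A)).NeBot := ae_neBot.mpr hres
  obtain ⟨x₀, hx₀⟩ := (Besicovitch.ae_tendsto_measure_inter_div volume A).exists
  -- choose c
  set c : ℝ := (max l 0 + 1) / 2 with hc
  have hc0 : 0 < c := by positivity
  have hc1 : c < 1 := by
    have : max l 0 < 1 := max_lt hl one_pos
    rw [hc]; linarith
  have hlc : l < c := by
    have : l ≤ max l 0 := le_max_left l 0
    rw [hc]; linarith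
  -- eventually the density ratio exceeds ofReal c
  have hev : ∀ᶠ r in 𝓝[>] (0:ℝ),
      ENNReal.ofReal c < volume (A ∩ closedBall x₀ r) / volume (closedBall x₀ r) :=
    hx₀.eventually_const_lt (by
      rw [show (1 : ENNReal) = ENNReal.ofReal 1 from (ENNReal.ofReal_one).symm]
      exact ENNReal.ofReal_lt_ofReal_iff_of_nonneg hc0.le |>.mpr hc1)
  obtain ⟨r₀, hr₀pos, hr₀⟩ := mem_nhdsGT_iff_exists_Ioc_subset.mp hev
  rw [Set.mem_Ioi] at hr₀pos
  -- main claim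
  have main : ∀ n : ℤ, n ≠ 0 → (1:ℝ) / (2 * |(n:ℝ)|) ≤ r₀ → l < innerHaar (n • B) := by
    intro n hn hnr
    have hnpos : (0:ℝ) < |(n:ℝ)| := by
      simp only [abs_pos, ne_eq, Int.cast_eq_zero]; exact hn
    set r : ℝ := 1 / (2 * |(n:ℝ)|) with hr
    have hrpos : 0 < r := by positivity
    have hball := hr₀ ⟨hrpos, hnr⟩
    rw [Set.mem_setOf_eq] at hball
    -- volume of the ball
    have hvb : volume (closedBall x₀ r) = ENNReal.ofReal (2 * r) := by
      rw [Real.volume_closedBall]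
    -- get the lower bound on the slice
    have hslice : ENNReal.ofReal (c * (2 * r)) < volume (A ∩ closedBall x₀ r) := by
      have := ENNReal.mul_lt_of_lt_div hball
      rw [hvb] at this
      rwa [ENNReal.ofReal_mul hc0.le]
    set S : Set ℝ := A ∩ closedBall x₀ r with hS
    set T : Set ℝ := ((n:ℝ)) • S with hT
    -- volume of T
    have hvT : volume T = ENNReal.ofReal |(n:ℝ)| * volume S := by
      rw [hT, Measure.addHaar_smul]
      simp
    have hvT' : ENNReal.ofReal c < volume T := by
      rw [hvT]
      calc ENNReal.ofReal c = ENNReal.ofReal |(n:ℝ)| * ENNReal.ofReal (c * (2 * r)) := by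
            rw [← ENNReal.ofReal_mul hnpos.le]
            congr 1
            rw [hr]; field_simp
      _ < ENNReal.ofReal |(n:ℝ)| * volume S := by
            refine ENNReal.mul_lt_mul_iff_right ?_ ENNReal.ofReal_ne_top |>.mpr hslice
            simp [ENNReal.ofReal_eq_zero, not_le, hnpos, hn]
    -- T is contained in Icc a (a+1) where a = n x₀ - 1/2
    set a : ℝ := (n:ℝ) * x₀ - 1/2 with ha
    have hTIcc : T ⊆ Icc a (a + 1) := by
      rintro y ⟨s, hs, rfl⟩
      have hsb : s ∈ closedBall x₀ r := hs.2
      rw [mem_closedBall, Real.dist_eq] at hsb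
      have : |(n:ℝ) * s - (n:ℝ) * x₀| ≤ 1/2 := by
        rw [← mul_sub, abs_mul]
        calc |(n:ℝ)| * |s - x₀| ≤ |(n:ℝ)| * r := by
              exact mul_le_mul_of_nonneg_left hsb (abs_nonneg _)
        _ = 1/2 := by rw [hr]; field_simp
      have h1 := abs_le.mp this
      constructor
      · simp only [smul_eq_mul]; rw [ha]; linarith [h1.1]
      · simp only [smul_eq_mul]; rw [ha]; linarith [h1.2]
    -- n • K (image) is closed and contained in n • B
    set K' : Set UnitAddCircle := (fun x => n • x) '' K with hK'
    have hK'c : IsClosed K' := (hKc.isCompact.image (continuous_zsmul n)).isClosed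
    have hK'B : K' ⊆ n • B := by
      rintro y ⟨k, hk, rfl⟩
      exact zsmul_mem_zsmul_set (hKB hk) n
    -- T (intersected with Ioc) is in the preimage of K'
    have hTsub : T ∩ Ioc a (a + 1) ⊆ QuotientAddGroup.mk ⁻¹' K' ∩ Ioc a (a + 1) := by
      rintro y ⟨⟨s, hs, rfl⟩, hy2⟩
      refine ⟨?_, hy2⟩
      have hsK : (s : UnitAddCircle) ∈ K := hs.1.1
      show ((((n:ℝ) • s : ℝ)) : UnitAddCircle) ∈ K'
      have : (((n:ℝ) • s : ℝ) : UnitAddCircle) = n • (s : UnitAddCircle) := by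
        rw [smul_eq_mul, ← zsmul_eq_mul, AddCircle.coe_zsmul 1]
      rw [this]
      exact ⟨(s : UnitAddCircle), hsK, rfl⟩
    -- measure computation
    have hvol : ENNReal.ofReal c < volume K' := by
      have e1 : volume K' = volume (QuotientAddGroup.mk ⁻¹' K' ∩ Ioc a (a + 1)) :=
        AddCircle.add_projection_respects_measure (T := 1) a hK'c.measurableSet
      have e2 : volume T ≤ volume (T ∩ Ioc a (a + 1)) := by
        have hsub : T ⊆ (T ∩ Ioc a (a + 1)) ∪ {a} := by
          intro y hy
          rcases eq_or_ne y a with h | h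
          · exact Or.inr (h ▸ rfl)
          · left
            refine ⟨hy, ?_, (hTIcc hy).2⟩
            exact lt_of_le_of_ne (hTIcc hy).1 (Ne.symm h)
        calc volume T ≤ volume ((T ∩ Ioc a (a + 1)) ∪ {a}) := measure_mono hsub
        _ ≤ volume (T ∩ Ioc a (a + 1)) + volume ({a} : Set ℝ) := measure_union_le _ _
        _ = volume (T ∩ Ioc a (a + 1)) := by rw [Real.volume_singleton, add_zero]
      calc ENNReal.ofReal c < volume T := hvT'
      _ ≤ volume (T ∩ Ioc a (a + 1)) := e2
      _ ≤ volume (QuotientAddGroup.mk ⁻¹' K' ∩ Ioc a (a + 1)) := measure_mono hTsub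
      _ = volume K' := e1.symm
    exact lt_of_lt_of_le hlc (le_innerHaar hK'c hK'B hvol).le
  -- conclude finiteness
  set M : ℕ := ⌈1 / (2 * r₀)⌉₊ with hM
  apply Set.Finite.subset (Set.finite_Icc (-(M:ℤ)) (M:ℤ))
  intro n hn
  rw [Set.mem_setOf_eq] at hn
  by_contra hmem
  rw [Set.mem_Icc, not_and_or] at hmem
  have hnM : (M:ℝ) < |(n:ℝ)| := by
    rcases hmem with h | h
    · push_neg at h
      have : (n:ℝ) < -(M:ℝ) := by exact_mod_cast h
      rw [abs_of_neg (by linarith [Nat.cast_nonneg (α := ℝ) M])]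
      linarith
    · push_neg at h
      have : (M:ℝ) < (n:ℝ) := by exact_mod_cast h
      rw [abs_of_pos (by linarith [Nat.cast_nonneg (α := ℝ) M])]
      linarith
  have hn0 : n ≠ 0 := by
    intro h
    rw [h] at hnM
    simp at hnM
    linarith [Nat.cast_nonneg (α := ℝ) M, hnM]
  have hle : (1:ℝ) / (2 * |(n:ℝ)|) ≤ r₀ := by
    have h1 : 1 / (2 * r₀) ≤ (M:ℝ) := Nat.le_ceil _
    have h2 : 1 / (2 * r₀) < |(n:ℝ)| := lt_of_le_of_lt h1 hnM
    have hnpos : (0:ℝ) < |(n:ℝ)| := by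
      simp only [abs_pos, ne_eq, Int.cast_eq_zero]; exact hn0
    rw [div_le_iff₀ (by positivity)]
    rw [div_lt_iff₀ (by positivity)] at h2
    nlinarith
  exact absurd hn (not_le.mpr (main n hn0 hle))
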